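/- Let A and B be elements of SL(2,ℂ) such that t := Tr(A) is not a real number in the segment [−2, 2] (A is loxodromic). Let α and β be the roots of z² − tz + 1 = 0 with |α| > 1 > |β|. Suppose Tr(AⁿB) ≠ 0 for every integer n ≥ 0 and Tr(AB)/Tr(B) ≠ β. Then Tr(AⁿB)/Tr(Aⁿ⁻¹B) → α as n → ∞. -/

import Mathlib

open Filter Matrix

private lemma sl2_sq (M : Matrix (Fin 2) (Fin 2) ℂ) (h : M.det = 1) :
    M * M = M.trace • M - 1 := by
  have hd := M.det_fin_two
  rw [h] at hd
  ext i j
  fin_cases i <;> fin_cases j <;>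
    simp [Matrix.mul_apply, Fin.sum_univ_two, Matrix.trace_fin_two, Matrix.one_apply] <;>
    ring_nf <;> linear_combination hd

/-- For A, B ∈ SL(2,ℂ) with A loxodromic (Tr A not a real number in [−2,2]),
    with α, β the roots of z² − (Tr A)z + 1 = 0 labelled so that |α| > 1 > |β|,
    if Tr(AⁿB) ≠ 0 for all n ≥ 0 and Tr(AB)/Tr(B) ≠ β, then
    Tr(AⁿB)/Tr(Aⁿ⁻¹B) → α. -/
theorem tendsto_trace_ratio_loxodromic
    (A B : Matrix.SpecialLinearGroup (Fin 2) ℂ) (t : ℂ)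
    (htr : ((A : Matrix (Fin 2) (Fin 2) ℂ)).trace = t)
    (ht : ¬ ∃ x : ℝ, -2 ≤ x ∧ x ≤ 2 ∧ t = (x : ℂ))
    (α β : ℂ) (hα : α ^ 2 - t * α + 1 = 0) (hβ : β ^ 2 - t * β + 1 = 0)
    (hαβ : ‖β‖ < 1 ∧ 1 < ‖α‖)
    (hne : ∀ n : ℕ,
      ((A ^ n * B : Matrix.SpecialLinearGroup (Fin 2) ℂ) :
        Matrix (Fin 2) (Fin 2) ℂ).trace ≠ 0)
    (hstart :
      ((A * B : Matrix.SpecialLinearGroup (Fin 2) ℂ) :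
        Matrix (Fin 2) (Fin 2) ℂ).trace /
        ((B : Matrix (Fin 2) (Fin 2) ℂ)).trace ≠ β) :
    Filter.Tendsto
      (fun n : ℕ =>
        ((A ^ (n + 1) * B : Matrix.SpecialLinearGroup (Fin 2) ℂ) :
          Matrix (Fin 2) (Fin 2) ℂ).trace /
        ((A ^ n * B : Matrix.SpecialLinearGroup (Fin 2) ℂ) :
          Matrix (Fin 2) (Fin 2) ℂ).trace)
      Filter.atTop (nhds α) := by
  obtain ⟨hβ1, hα1⟩ := hαβ
  have hαβne : α ≠ β := fun h => by rw [h] at hα1; exact absurd (hβ1.trans hα1) (lt_irrefl _)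
  have hDne : α - β ≠ 0 := sub_ne_zero.mpr hαβne
  have hsum : α + β = t := by
    have h0 : (α - β) * (α + β - t) = 0 := by linear_combination hα - hβ
    rcases mul_eq_zero.mp h0 with h | h
    · exact absurd h hDne
    · exact sub_eq_zero.mp h
  have hαne : α ≠ 0 := by
    intro h; rw [h] at hα1; simp at hα1; linarith
  -- the trace sequence
  set u : ℕ → ℂ := fun n =>
    ((A ^ n * B : Matrix.SpecialLinearGroup (Fin 2) ℂ) :
      Matrix (Fin 2) (Fin 2) ℂ).trace with hu
  have key : (A : Matrix (Fin 2) (Fin 2) ℂ) * A = t • (A : Matrix (Fin 2) (Fin 2) ℂ) - 1 := by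
    rw [← htr]; exact sl2_sq _ A.2
  have hrec : ∀ n, u (n + 2) = t * u (n + 1) - u n := by
    intro n
    have hm : ((A ^ (n + 2) * B : Matrix.SpecialLinearGroup (Fin 2) ℂ) :
        Matrix (Fin 2) (Fin 2) ℂ) =
        t • ((A ^ (n + 1) * B : Matrix.SpecialLinearGroup (Fin 2) ℂ) :
          Matrix (Fin 2) (Fin 2) ℂ) -
        ((A ^ n * B : Matrix.SpecialLinearGroup (Fin 2) ℂ) :
          Matrix (Fin 2) (Fin 2) ℂ) := by
      simp only [Matrix.SpecialLinearGroup.coe_mul, Matrix.SpecialLinearGroup.coe_pow]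
      rw [show n + 2 = n + 1 + 1 from rfl, pow_succ, pow_succ, mul_assoc ((A : Matrix (Fin 2) (Fin 2) ℂ) ^ n), key]
      simp [mul_sub, sub_mul, smul_mul_assoc, mul_smul_comm, mul_assoc, pow_succ]
    simp only [hu, hm, Matrix.trace_sub, Matrix.trace_smul, smul_eq_mul]
  -- closed form
  set c : ℂ := (u 1 - β * u 0) / (α - β) with hc
  set d : ℂ := (α * u 0 - u 1) / (α - β) with hd
  have hclosed : ∀ n, u n = c * α ^ n + d * β ^ n := by
    intro n
    induction n using Nat.twoStepInduction with
    | zero => rw [hc, hd]; field_simp; ring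
    | one => rw [hc, hd]; field_simp; ring
    | more n ih1 ih2 =>
      rw [hrec n, ih1, ih2]
      linear_combination (-(c * α ^ n)) * hα - (d * β ^ n) * hβ
  -- c ≠ 0
  have hu0 : u 0 ≠ 0 := by simp only [hu]; simpa using hne 0
  have hu1 : u 1 ≠ β * u 0 := by
    intro h
    apply hstart
    have : u 1 = ((A * B : Matrix.SpecialLinearGroup (Fin 2) ℂ) :
        Matrix (Fin 2) (Fin 2) ℂ).trace := by simp [hu]
    have hB : u 0 = ((B : Matrix (Fin 2) (Fin 2) ℂ)).trace := by simp [hu]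
    rw [← this, ← hB, h, mul_div_assoc, div_self hu0, mul_one]
  have hcne : c ≠ 0 := by
    rw [hc]
    exact div_ne_zero (sub_ne_zero.mpr hu1) hDne
  -- the ratio r = β/α
  set r : ℂ := β / α with hr
  have hrnorm : ‖r‖ < 1 := by
    rw [hr, norm_div]
    rw [div_lt_one (by simpa using (lt_trans one_pos hα1))]
    simpa using hβ1.trans hα1
  have htend0 : Tendsto (fun n : ℕ => r ^ n) atTop (nhds 0) :=
    tendsto_pow_atTop_nhds_zero_of_norm_lt_one hrnorm
  set k : ℂ := d / c with hk
  have heq : ∀ n : ℕ, u (n + 1) / u n = (α + k * β * r ^ n) / (1 + k * r ^ n) := by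
    intro n
    have hene : c * α ^ n ≠ 0 := mul_ne_zero hcne (pow_ne_zero n hαne)
    have h1 : u (n + 1) = (c * α ^ n) * (α + k * β * r ^ n) := by
      rw [hclosed (n + 1), hk, hr, div_pow]
      field_simp
      try ring
    have h2 : u n = (c * α ^ n) * (1 + k * r ^ n) := by
      rw [hclosed n, hk, hr, div_pow]
      field_simp
      try ring
    rw [h1, h2, mul_div_mul_left _ _ hene]
  have hnum : Tendsto (fun n : ℕ => α + k * β * r ^ n) atTop (nhds α) := by
    have := htend0.const_mul (k * β)
    simpa using tendsto_const_nhds.add this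
  have hden : Tendsto (fun n : ℕ => 1 + k * r ^ n) atTop (nhds 1) := by
    have := htend0.const_mul k
    simpa using tendsto_const_nhds.add this
  have hfin : Tendsto (fun n : ℕ => (α + k * β * r ^ n) / (1 + k * r ^ n)) atTop (nhds α) := by
    simpa [Pi.div_def] using hnum.div hden one_ne_zero
  exact hfin.congr fun n => (heq n).symm
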